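/- Let A be an abelian category with enough projectives, and let M be a full subcategory of A. If every object M₀ of M admits an exact sequence P₁ → P₀ → M₀ → 0 with P₁, P₀ projective such that Hom(−, M') applied to P₁ → P₀ is surjective for every M' in M, then Ext¹(M₀, X) = 0 for every M₀ in M and every X that is a quotient of an object of M. -/

import Mathlib

open CategoryTheory Limits Opposite

noncomputable section

universe v u

variable {C : Type u} [Category.{v} C] [Abelian C] [EnoughProjectives C]

attribute [local instance] CategoryTheory.Abelian.hasFiniteBiproducts

/-- `Fac M`: quotients of finite direct sums of objects of `M`. -/
def Fac (M : Set C) : Set C :=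
  {X | ∃ (n : ℕ) (f : Fin n → C), (∀ i, f i ∈ M) ∧
    haveI : HasBiproductsOfShape (Fin n) C := HasFiniteBiproducts.out n
    ∃ e : (⨁ f) ⟶ X, Epi e}

/-- Vanishing of `Ext¹(X, Y)`. -/
def ext1Zero (X Y : C) : Prop := Subsingleton (((Ext ℤ C 1).obj (op X)).obj Y)

/-- Vanishing of `Ext²(X, Y)`. -/
def ext2Zero (X Y : C) : Prop := Subsingleton (((Ext ℤ C 2).obj (op X)).obj Y)

/-- `v : P ⟶ V₀` is a left `M`-approximation. -/
def IsLeftApprox (M : Set C) {P V₀ : C} (v : P ⟶ V₀) : Prop :=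
  ∀ V' ∈ M, ∀ h : P ⟶ V', ∃ t : V₀ ⟶ V', v ≫ t = h

/-- `u : U₀ ⟶ X` is a right `M`-approximation. -/
def IsRightApprox (M : Set C) {U₀ X : C} (u : U₀ ⟶ X) : Prop :=
  ∀ M' ∈ M, ∀ h : M' ⟶ X, ∃ t : M' ⟶ U₀, t ≫ u = h

/-- The Ext-projective objects of `S`. -/
def ExtProj (S : Set C) : Set C := {D ∈ S | ∀ Z ∈ S, ext1Zero D Z}

/-- `M` is τ-rigid: `Ext¹(M, Fac M) = 0`. -/
def TauRigid (M : Set C) : Prop := ∀ M₀ ∈ M, ∀ X ∈ Fac M, ext1Zero M₀ X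

/-- `P` admits an exact sequence `P ⟶ Ma ⟶ Mb ⟶ 0` with `Ma, Mb ∈ M` and the
first map a left `M`-approximation. -/
def HasApproxSeq (M : Set C) (P : C) : Prop :=
  ∃ M₀ ∈ M, ∃ M₁ ∈ M, ∃ (m : P ⟶ M₀) (g : M₀ ⟶ M₁) (w : m ≫ g = 0),
    (ShortComplex.mk m g w).Exact ∧ Epi g ∧ IsLeftApprox M m

/-- `M` is a support τ-tilting subcategory. -/
def SupportTauTilting (M : Set C) : Prop :=
  TauRigid M ∧ ∀ P : C, Projective P → HasApproxSeq M P

/-- `0 ⟶ X ⟶ Y ⟶ Z ⟶ 0` is a short exact sequence. -/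
def SES {X Y Z : C} (f : X ⟶ Y) (g : Y ⟶ Z) : Prop :=
  ∃ w : f ≫ g = 0, (ShortComplex.mk f g w).Exact ∧ Mono f ∧ Epi g

/-- `U` is hereditary: `Ext²(U, −) = 0`. -/
def Hereditary1 (U : Set C) : Prop := ∀ U₀ ∈ U, ∀ X : C, ext2Zero U₀ X

/-- `U` is partial tilting. -/
def PartialTilting (U : Set C) : Prop :=
  Hereditary1 U ∧ ∀ U₀ ∈ U, ∀ U₁ ∈ U, ext1Zero U₀ U₁

/-- `U` is tilting. -/
def Tilting (U : Set C) : Prop :=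
  PartialTilting U ∧ ∀ P : C, Projective P →
    ∃ Ua ∈ U, ∃ Ub ∈ U, ∃ (i : P ⟶ Ua) (p : Ua ⟶ Ub), SES i p

/-- `U^⊥₁ = {X | Ext¹(U, X) = 0}`. -/
def Perp1 (U : Set C) : Set C := {X | ∀ U₀ ∈ U, ext1Zero U₀ X}

/-- `M` is closed under finite direct sums and direct summands. -/
def AdditivelyClosed (M : Set C) : Prop :=
  (∀ (n : ℕ) (f : Fin n → C), (∀ i, f i ∈ M) →
    haveI : HasBiproductsOfShape (Fin n) C := HasFiniteBiproducts.out n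
    (⨁ f) ∈ M) ∧
  (∀ M₀ ∈ M, ∀ (X : C) (r : M₀ ⟶ X) (s : X ⟶ M₀), s ≫ r = 𝟙 X → X ∈ M)

/-- The additive closure of a class of objects: direct summands of finite
direct sums of its objects. -/
def AddClosure (X : Set C) : Set C :=
  {Y | ∃ (n : ℕ) (f : Fin n → C), (∀ i, f i ∈ X) ∧
    haveI : HasBiproductsOfShape (Fin n) C := HasFiniteBiproducts.out n
    ∃ (r : (⨁ f) ⟶ Y) (s : Y ⟶ ⨁ f), s ≫ r = 𝟙 Y}

namespace TauRigidAux

open Projective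

variable {P₀ P₁ M₀ : C}

/-- A projective resolution complex starting with a given presentation. -/
def resComplex (f : P₁ ⟶ P₀) : ChainComplex C ℕ :=
  ChainComplex.mk' P₀ P₁ f (fun f' => ⟨syzygies f', d f', by exact (Category.assoc _ _ _).trans ((congrArg _ (kernel.condition f')).trans Limits.comp_zero)⟩)

lemma resComplex_d_1_0 (f : P₁ ⟶ P₀) : (resComplex f).d 1 0 = f :=
  ChainComplex.mk'_d_1_0 _ _ _ _

instance resComplex_projective (f : P₁ ⟶ P₀) [Projective P₀] [Projective P₁] (n : ℕ) :
    Projective ((resComplex f).X n) := by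
  obtain (_ | _ | _ | n) := n
  · exact (inferInstance : Projective P₀)
  · exact (inferInstance : Projective P₁)
  · apply Projective.projective_over
  · apply Projective.projective_over

lemma resComplex_exactAt_succ (f : P₁ ⟶ P₀) (n : ℕ) :
    (resComplex f).ExactAt (n + 1) := by
  rw [HomologicalComplex.exactAt_iff' _ (n + 1 + 1) (n + 1) n (by simp) (by simp)]
  refine ShortComplex.exact_of_iso ?_ (CategoryTheory.exact_d_f ((resComplex f).d (n + 1) n))
  refine ShortComplex.isoMk
    (ChainComplex.mk'XIso P₀ P₁ f (fun f' => ⟨syzygies f', d f', by exact (Category.assoc _ _ _).trans ((congrArg _ (kernel.condition f')).trans Limits.comp_zero)⟩) n).symm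
    (Iso.refl _) (Iso.refl _) ?_ ?_
  · refine ((Iso.eq_inv_comp _).2 ?_).symm.trans (Category.comp_id _).symm
    exact (ChainComplex.mk'_d _ _ _ _ n).symm
  · exact (Category.id_comp _).trans (Category.comp_id _).symm

/-- The projective resolution built from a given presentation. -/
def res (f : P₁ ⟶ P₀) (g : P₀ ⟶ M₀) (w : f ≫ g = 0)
    (hfg : (ShortComplex.mk f g w).Exact) [Projective P₀] [Projective P₁] [Epi g] :
    ProjectiveResolution M₀ where
  complex := resComplex f
  π := (ChainComplex.toSingle₀Equiv _ _).symm ⟨g, by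
          rw [resComplex_d_1_0]; exact w⟩
  quasiIso := ⟨fun n => by
    cases n
    · rw [ChainComplex.quasiIsoAt₀_iff, ShortComplex.quasiIso_iff_of_zeros']
      · refine (ShortComplex.exact_and_epi_g_iff_of_iso ?_).2 ⟨hfg, by dsimp; infer_instance⟩
        exact ShortComplex.isoMk (Iso.refl _) (Iso.refl _) (Iso.refl _)
          (by simp [resComplex_d_1_0]; exact (Category.id_comp f).trans (Category.comp_id f).symm) (by simp; erw [ChainComplex.toSingle₀Equiv_symm_apply_f_zero]; exact (Category.id_comp g).trans (Category.comp_id g).symm)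
      all_goals rfl
    · rw [quasiIsoAt_iff_exactAt']
      · apply resComplex_exactAt_succ
      · apply ChainComplex.exactAt_succ_single_obj⟩

end TauRigidAux

lemma subsingleton_of_isZero {N : ModuleCat ℤ} (h : IsZero N) : Subsingleton N := by
  constructor
  intro x y
  have hid : (𝟙 N : N ⟶ N) = 0 := h.eq_of_src _ _
  calc x = (𝟙 N : N ⟶ N) x := rfl
    _ = (0 : N ⟶ N) x := by rw [hid]
    _ = (𝟙 N : N ⟶ N) y := by rw [hid]; rfl
    _ = y := rfl

theorem stmt0 (M : Set C)
    (h : ∀ M₀ ∈ M, ∃ (P₁ P₀ : C) (_ : Projective P₁) (_ : Projective P₀)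
      (f : P₁ ⟶ P₀) (g : P₀ ⟶ M₀) (w : f ≫ g = 0),
      (ShortComplex.mk f g w).Exact ∧ Epi g ∧
        ∀ M' ∈ M, Function.Surjective (fun h₀ : P₀ ⟶ M' => f ≫ h₀)) :
    ∀ M₀ ∈ M, ∀ X ∈ Fac M, ext1Zero M₀ X := by
  intro M₀ hM₀ X hX
  obtain ⟨P₁, P₀, hP₁, hP₀, f, g, w, hex, hepi, happrox⟩ := h M₀ hM₀
  obtain ⟨n, fι, hfι, e, he⟩ := hX
  haveI : HasBiproductsOfShape (Fin n) C := HasFiniteBiproducts.out n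
  haveI := hP₀; haveI := hP₁; haveI := hepi; haveI := he
  let e' : (⨁ fι) ⟶ X := e
  haveI he' : Epi e' := he
  let P : ProjectiveResolution M₀ := TauRigidAux.res f g w hex
  refine subsingleton_of_isZero ?_
  refine IsZero.of_iso ?_ (P.isoExt 1 X)
  rw [← HomologicalComplex.exactAt_iff_isZero_homology]
  rw [HomologicalComplex.exactAt_iff' _ 0 1 2 (by simp) (by simp)]
  rw [ShortComplex.moduleCat_exact_iff]
  intro x _
  -- `x : P₁ ⟶ X`; lift it through the epimorphism `e` using projectivity of `P₁`
  let x' : (P₁ ⟶ X) := x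
  have hlift : Projective.factorThru x' e' ≫ e' = x' := Projective.factorThru_comp x' e'
  -- factor the lift through `f` using the approximation property componentwise
  have hθ : ∀ i : Fin n, ∃ θi : P₀ ⟶ fι i,
      f ≫ θi = Projective.factorThru x' e' ≫ biproduct.π fι i := fun i =>
    happrox (fι i) (hfι i) (Projective.factorThru x' e' ≫ biproduct.π fι i)
  choose θ hθ' using hθ
  have hfθ : f ≫ biproduct.lift θ = Projective.factorThru x' e' := by
    apply biproduct.hom_ext
    intro i
    simp [hθ' i]
  refine ⟨(biproduct.lift θ ≫ e' : P₀ ⟶ X), ?_⟩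
  show (P.complex.linearYonedaObj ℤ X).d 0 1 (biproduct.lift θ ≫ e') = x'
  rw [ChainComplex.linearYonedaObj_d]
  show P.complex.d 1 0 ≫ (biproduct.lift θ ≫ e') = x'
  have hd : P.complex.d 1 0 = f := TauRigidAux.resComplex_d_1_0 f
  rw [hd]; erw [← Category.assoc]
  exact hfθ ▸ hlift
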